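/- Let R be a finite commutative chain ring, σ an automorphism of R of order m, λ ∈ U(R) with λ² = 1 and σ^{m−k}(λ) = λ. A λ-constacyclic code C (ideal of R^{γ_λ} C_n) is a k-Galois LCD code (C ∩ C^{⊥_k} = {0}) if and only if C is generated by an idempotent e with e = e·(σ^k(e))*. -/

import Mathlib

open Finset

/-- Multiplication of the twisted group ring `R^{γ_λ} C_n`, where the cyclic
group `C_n` is identified with `Fin n` (additively), elements are coefficient
vectors `Fin n → R`, and `γ_λ(gⁱ,gʲ) = 1` if `i+j < n`, `λ` if `i+j ≥ n`. -/
def ctMul {R : Type*} [CommRing R] {n : ℕ} (lam : Rˣ) (f h : Fin n → R) :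
    Fin n → R :=
  fun k => ∑ i : Fin n, ∑ j : Fin n,
    if i + j = k then (if (i : ℕ) + (j : ℕ) < n then 1 else (lam : R)) * (f i * h j) else 0

/-- The classical involution on `R^{γ_λ} C_n`: `Σ αᵢ ḡⁱ ↦ Σ αᵢ ḡ⁻ⁱ`
(in coefficient form, using `ḡ⁻ⁱ = λ⁻¹ ḡ^{n-i}` for `i ≠ 0`). -/
def ctStar {R : Type*} [CommRing R] {n : ℕ} [NeZero n] (lam : Rˣ) (f : Fin n → R) :
    Fin n → R :=
  fun j => (if j = 0 then 1 else ((lam⁻¹ : Rˣ) : R)) * f (-j)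

set_option linter.unusedSectionVars false
namespace CT

variable {R : Type*} [CommRing R] {n : ℕ} [NeZero n] (lam : Rˣ)

/-- the 2-cocycle -/
def gam (lam : Rˣ) (i j : Fin n) : R := if (i : ℕ) + (j : ℕ) < n then 1 else (lam : R)

theorem ctMul_apply (f h : Fin n → R) (k : Fin n) :
    ctMul lam f h k = ∑ i : Fin n, gam lam i (k - i) * (f i * h (k - i)) := by
  unfold ctMul
  refine Finset.sum_congr rfl fun i _ => ?_
  have : ∀ j : Fin n, (if i + j = k then (if (i : ℕ) + (j : ℕ) < n then 1 else (lam : R)) * (f i * h j) else 0)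
      = (if j = k - i then gam lam i j * (f i * h j) else 0) := by
    intro j
    refine if_congr ?_ rfl rfl
    constructor
    · intro hh; subst hh; rw [add_comm]; exact (add_sub_cancel_right j i).symm
    · intro hh; subst hh; rw [add_comm]; exact sub_add_cancel k i
  simp only [this]
  rw [Finset.sum_ite_eq' Finset.univ (k - i)]
  simp


theorem ctMul_comm (f h : Fin n → R) : ctMul lam f h = ctMul lam h f := by
  funext k
  unfold ctMul
  rw [Finset.sum_comm]
  refine Finset.sum_congr rfl fun j _ => Finset.sum_congr rfl fun i _ => ?_
  rw [add_comm i j, Nat.add_comm (i : ℕ) (j : ℕ), mul_comm (f i) (h j)]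

theorem ctMul_add_right (f h₁ h₂ : Fin n → R) :
    ctMul lam f (h₁ + h₂) = ctMul lam f h₁ + ctMul lam f h₂ := by
  funext k
  simp [ctMul_apply, mul_add, Finset.sum_add_distrib]

theorem ctMul_sub_right (f h₁ h₂ : Fin n → R) :
    ctMul lam f (h₁ - h₂) = ctMul lam f h₁ - ctMul lam f h₂ := by
  funext k
  simp [ctMul_apply, mul_sub, Finset.sum_sub_distrib]

/-- the identity of the twisted group ring -/
def ctOne : Fin n → R := fun k => if k = 0 then 1 else 0

theorem ctMul_one (f : Fin n → R) : ctMul lam f ctOne = f := by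
  funext k
  rw [ctMul_apply]
  have : ∀ i : Fin n, gam lam i (k - i) * (f i * ctOne (k - i)) = if i = k then f i else 0 := by
    intro i
    by_cases hik : i = k
    · subst hik
      simp [ctOne, gam, sub_self, Fin.is_lt]
    · have : k - i ≠ 0 := fun hh => hik (by rw [eq_comm, ← sub_eq_zero]; exact hh)
      simp [ctOne, this, hik]
  simp only [this]
  rw [Finset.sum_ite_eq' Finset.univ k]
  simp

theorem gam_cocycle (i j l : Fin n) :
    gam lam i j * gam lam (i + j) l = gam lam j l * gam lam i (j + l) := by
  unfold gam
  have iv := i.is_lt; have jv := j.is_lt; have lv := l.is_lt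
  have hn0 : 0 < n := Nat.pos_of_ne_zero (NeZero.ne n)
  simp only [Fin.val_add]
  rcases Nat.lt_or_ge ((i : ℕ) + (j : ℕ)) n with h1 | h1 <;>
    rcases Nat.lt_or_ge ((j : ℕ) + (l : ℕ)) n with h2 | h2
  · simp only [Nat.mod_eq_of_lt h1, Nat.mod_eq_of_lt h2]
    rw [if_pos h1, if_pos h2, one_mul, one_mul]
    refine if_congr ?_ rfl rfl
    omega
  · have e2 : ((j : ℕ) + (l : ℕ)) % n = (j : ℕ) + (l : ℕ) - n := by
      rw [Nat.mod_eq_sub_mod h2, Nat.mod_eq_of_lt (by omega)]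
    simp only [Nat.mod_eq_of_lt h1, e2]
    rw [if_pos h1, if_neg (by omega), if_neg (by omega), if_pos (by omega)]
    ring
  · have e1 : ((i : ℕ) + (j : ℕ)) % n = (i : ℕ) + (j : ℕ) - n := by
      rw [Nat.mod_eq_sub_mod h1, Nat.mod_eq_of_lt (by omega)]
    simp only [e1, Nat.mod_eq_of_lt h2]
    rw [if_neg (by omega), if_pos h2, if_pos (by omega), if_neg (by omega)]
    ring
  · have e1 : ((i : ℕ) + (j : ℕ)) % n = (i : ℕ) + (j : ℕ) - n := by
      rw [Nat.mod_eq_sub_mod h1, Nat.mod_eq_of_lt (by omega)]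
    have e2 : ((j : ℕ) + (l : ℕ)) % n = (j : ℕ) + (l : ℕ) - n := by
      rw [Nat.mod_eq_sub_mod h2, Nat.mod_eq_of_lt (by omega)]
    simp only [e1, e2]
    rw [if_neg (show ¬((i : ℕ) + (j : ℕ) < n) from by omega),
      if_neg (show ¬((j : ℕ) + (l : ℕ) < n) from by omega)]
    exact congrArg (fun z => (lam : R) * z) (if_congr (by omega) rfl rfl)

theorem ctMul_assoc (f g h : Fin n → R) :
    ctMul lam (ctMul lam f g) h = ctMul lam f (ctMul lam g h) := by
  funext k
  rw [ctMul_apply, ctMul_apply]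
  have lhs : ∀ p : Fin n, gam lam p (k - p) * (ctMul lam f g p * h (k - p))
      = ∑ i : Fin n, gam lam p (k - p) * (gam lam i (p - i) * (f i * g (p - i)) * h (k - p)) := by
    intro p
    rw [ctMul_apply, Finset.sum_mul, Finset.mul_sum]
  simp only [lhs]
  rw [Finset.sum_comm]
  refine Finset.sum_congr rfl fun i _ => ?_
  rw [ctMul_apply]
  simp only [Finset.mul_sum]
  rw [← Equiv.sum_comp (Equiv.addLeft i)
    (fun p => gam lam p (k - p) * (gam lam i (p - i) * (f i * g (p - i)) * h (k - p)))]
  refine Finset.sum_congr rfl fun j _ => ?_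
  simp only [Equiv.coe_addLeft, add_sub_cancel_left, sub_add_eq_sub_sub]
  have key := gam_cocycle lam i j (k - i - j)
  rw [add_sub_cancel] at key
  linear_combination (f i * g j * h (k - i - j)) * key

/-- coefficient of the involution -/
def mu (lam : Rˣ) (j : Fin n) : R := if j = 0 then 1 else (lam : R)

theorem val_neg_of_ne (s : Fin n) (hs : s ≠ 0) : ((-s : Fin n) : ℕ) = n - (s : ℕ) := by
  have h1 : (s : ℕ) ≠ 0 := fun hh => hs (Fin.ext hh)
  have h2 := s.is_lt
  rw [Fin.neg_def]
  simp only [Fin.val_mk]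
  exact Nat.mod_eq_of_lt (by omega)

theorem neg_ne_zero_fin {s : Fin n} (hs : s ≠ 0) : -s ≠ 0 :=
  fun hh => hs (neg_eq_zero.mp hh)

section Star

variable (hlam : (lam : R) ^ 2 = 1)
include hlam

theorem lam_unit_sq : lam * lam = 1 := by
  ext
  simpa [sq] using hlam

theorem lam_inv_coe : ((lam⁻¹ : Rˣ) : R) = (lam : R) := by
  rw [inv_eq_of_mul_eq_one_right (lam_unit_sq lam hlam)]

theorem ctStar_apply (f : Fin n → R) (j : Fin n) :
    ctStar lam f j = mu lam j * f (-j) := by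
  unfold ctStar mu
  rw [lam_inv_coe lam hlam]

theorem mu_neg_mul (j : Fin n) : mu lam j * mu lam (-j) = 1 := by
  unfold mu
  by_cases hj : j = 0
  · simp [hj]
  · rw [if_neg hj, if_neg (fun hh => hj (neg_eq_zero.mp hh))]
    simpa [sq] using hlam

theorem ctStar_ctStar (f : Fin n → R) : ctStar lam (ctStar lam f) = f := by
  funext j
  rw [ctStar_apply lam hlam, ctStar_apply lam hlam, neg_neg, ← mul_assoc,
    mu_neg_mul lam hlam, one_mul]

theorem star_coeff (s t : Fin n) :
    mu lam (-(s + t)) * gam lam s t = gam lam (-s) (-t) * (mu lam (-s) * mu lam (-t)) := by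
  have hs2 := s.is_lt; have ht2 := t.is_lt
  have hll : (lam : R) * lam = 1 := by simpa [sq] using hlam
  by_cases hs : s = 0
  · subst hs
    by_cases ht : t = 0
    · subst ht; simp [mu, gam]
    · rw [zero_add, neg_zero]
      unfold mu gam
      have h1 : ((0 : Fin n) : ℕ) + (t : ℕ) < n := by simpa using t.is_lt
      have h2 : ((0 : Fin n) : ℕ) + ((-t : Fin n) : ℕ) < n := by simpa using (-t).is_lt
      rw [if_pos h1, if_pos h2, if_pos rfl, if_neg (neg_ne_zero_fin ht)]
      ring
  · by_cases ht : t = 0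
    · subst ht
      rw [add_zero, neg_zero]
      unfold mu gam
      have h1 : (s : ℕ) + ((0 : Fin n) : ℕ) < n := by simpa using s.is_lt
      have h2 : ((-s : Fin n) : ℕ) + ((0 : Fin n) : ℕ) < n := by simpa using (-s).is_lt
      rw [if_pos h1, if_pos h2, if_pos rfl, if_neg (neg_ne_zero_fin hs)]
      ring
    · have hsv : ((-s : Fin n) : ℕ) = n - (s : ℕ) := val_neg_of_ne s hs
      have htv : ((-t : Fin n) : ℕ) = n - (t : ℕ) := val_neg_of_ne t ht
      have hs1 : (s : ℕ) ≠ 0 := fun hh => hs (Fin.ext hh)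
      have ht1 : (t : ℕ) ≠ 0 := fun hh => ht (Fin.ext hh)
      by_cases hst : (s : ℕ) + (t : ℕ) = n
      · have hz : s + t = 0 := by
          ext
          rw [Fin.val_add, hst]
          simp [Nat.mod_self]
        rw [hz, neg_zero]
        unfold mu gam
        rw [if_pos rfl, if_neg (by omega), if_neg (neg_ne_zero_fin hs),
          if_neg (neg_ne_zero_fin ht), if_neg (by rw [hsv, htv]; omega)]
        rw [one_mul, ← mul_assoc, hll, one_mul]
      · have hz : s + t ≠ 0 := by
          intro hh
          have := congrArg Fin.val hh
          rw [Fin.val_add] at this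
          simp only [Fin.val_zero] at this
          rcases Nat.lt_or_ge ((s : ℕ) + (t : ℕ)) n with hc | hc
          · rw [Nat.mod_eq_of_lt hc] at this; omega
          · rw [Nat.mod_eq_sub_mod hc, Nat.mod_eq_of_lt (by omega)] at this; omega
        unfold mu gam
        rw [if_neg (neg_ne_zero_fin hz), if_neg (neg_ne_zero_fin hs), if_neg (neg_ne_zero_fin ht)]
        rcases Nat.lt_or_ge ((s : ℕ) + (t : ℕ)) n with hc | hc
        · rw [if_pos hc, if_neg (by rw [hsv, htv]; omega)]
          linear_combination (-(lam : R)) * hlam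
        · rw [if_neg (by omega), if_pos (by rw [hsv, htv]; omega)]
          ring

theorem ctStar_ctMul (f h : Fin n → R) :
    ctStar lam (ctMul lam f h) = ctMul lam (ctStar lam f) (ctStar lam h) := by
  funext j
  rw [ctStar_apply lam hlam, ctMul_apply, ctMul_apply, Finset.mul_sum]
  rw [← Equiv.sum_comp (Equiv.neg (Fin n))
    (fun a => gam lam a (j - a) * (ctStar lam f a * ctStar lam h (j - a)))]
  refine Finset.sum_congr rfl fun s _ => ?_
  simp only [Equiv.neg_apply]
  rw [ctStar_apply lam hlam, ctStar_apply lam hlam, neg_neg, sub_neg_eq_add,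
    show -(j + s) = -j - s from by abel]
  have key := star_coeff lam hlam s (-j - s)
  rw [show s + (-j - s) = -j from by abel, show -(-j - s) = j + s from by abel, neg_neg] at key
  linear_combination (f s * h (-j - s)) * key

end Star

section Maps

variable (φ : R ≃+* R)

theorem map_gam (hφ : φ (lam : R) = (lam : R)) (i j : Fin n) :
    φ (gam lam i j) = gam lam i j := by
  unfold gam
  split_ifs
  · exact map_one φ
  · exact hφ

theorem map_ctMul (hφ : φ (lam : R) = (lam : R)) (f h : Fin n → R) :
    (fun i => φ (ctMul lam f h i)) = ctMul lam (fun i => φ (f i)) (fun i => φ (h i)) := by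
  funext k
  rw [ctMul_apply, map_sum, ctMul_apply]
  refine Finset.sum_congr rfl fun i _ => ?_
  rw [map_mul, map_mul, map_gam lam φ hφ]

theorem map_ctStar (hlam : (lam : R) ^ 2 = 1) (hφ : φ (lam : R) = (lam : R)) (f : Fin n → R) :
    (fun j => φ (ctStar lam f j)) = ctStar lam (fun i => φ (f i)) := by
  funext j
  rw [ctStar_apply lam hlam, ctStar_apply lam hlam, map_mul]
  congr 1
  unfold mu
  split_ifs
  · exact map_one φ
  · exact hφ

end Maps

section Form

/-- the `k`-Galois form -/
def ctForm (τ : R ≃+* R) (u v : Fin n → R) : R := ∑ i, u i * τ (v i)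

variable (τ τ' : R ≃+* R)

theorem ctForm_single (i : Fin n) (v : Fin n → R) :
    ctForm τ (Pi.single i 1) v = τ (v i) := by
  unfold ctForm
  have : ∀ j : Fin n, Pi.single (M := fun _ => R) i 1 j * τ (v j)
      = if j = i then τ (v j) else 0 := by
    intro j
    rcases eq_or_ne j i with rfl | hji
    · simp
    · simp [Pi.single_apply, hji]
  simp only [this]
  rw [Finset.sum_ite_eq' Finset.univ i]
  simp

theorem eq_zero_of_forall_ctForm {w : Fin n → R} (h : ∀ b, ctForm τ b w = 0) : w = 0 := by
  funext i
  have := h (Pi.single i 1)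
  rw [ctForm_single] at this
  have h0 : τ (w i) = τ 0 := by rwa [map_zero]
  simpa using τ.injective h0

theorem ctForm_sub_right (u v w : Fin n → R) :
    ctForm τ u (v - w) = ctForm τ u v - ctForm τ u w := by
  unfold ctForm
  rw [← Finset.sum_sub_distrib]
  refine Finset.sum_congr rfl fun i _ => ?_
  simp [map_sub, mul_sub]

variable (hlam : (lam : R) ^ 2 = 1) (hτlam : τ (lam : R) = (lam : R))
  (hτ'lam : τ' (lam : R) = (lam : R))
  (hττ' : ∀ x : R, τ (τ' x) = x) (hτ'τ : ∀ x : R, τ' (τ x) = x)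

include hlam hτlam hτ'lam hττ' in
/-- adjunction: `[ab, x] = [b, a♯ x]` with `a♯ = (τ'∘a)*`. -/
theorem ctForm_mul_left (a b x : Fin n → R) :
    ctForm τ (ctMul lam a b) x
      = ctForm τ b (ctMul lam (ctStar lam (fun i => τ' (a i))) x) := by
  unfold ctForm
  have lhs : ∀ k : Fin n, ctMul lam a b k * τ (x k)
      = ∑ i : Fin n, gam lam i (k - i) * (a i * b (k - i)) * τ (x k) := by
    intro k; rw [ctMul_apply, Finset.sum_mul]
  have rhs : ∀ j : Fin n, b j * τ (ctMul lam (ctStar lam (fun i => τ' (a i))) x j)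
      = ∑ s : Fin n, b j * (gam lam s (j - s) * (mu lam s * a (-s) * τ (x (j - s)))) := by
    intro j
    rw [ctMul_apply, map_sum, Finset.mul_sum]
    refine Finset.sum_congr rfl fun s _ => ?_
    congr 1
    rw [map_mul, map_gam lam τ hτlam, ctStar_apply lam hlam, map_mul, map_mul, hττ']
    have hmu : τ (mu lam s) = mu lam s := by
      unfold mu; split_ifs; exacts [map_one τ, hτlam]
    rw [hmu]
  simp only [lhs, rhs]
  rw [Finset.sum_comm]
  conv_rhs => rw [Finset.sum_comm]
  -- LHS: ∑ i ∑ k, RHS: ∑ s ∑ j ; reindex RHS : s := -i, j := k - i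
  rw [← Equiv.sum_comp (Equiv.neg (Fin n))
    (fun s => ∑ j : Fin n, b j * (gam lam s (j - s) * (mu lam s * a (-s) * τ (x (j - s)))))]
  simp only [Equiv.neg_apply]
  refine Finset.sum_congr rfl fun i _ => ?_
  rw [← Equiv.sum_comp (Equiv.subRight i)
    (fun j => b j * (gam lam (-i) (j - -i) * (mu lam (-i) * a (- -i) * τ (x (j - -i)))))]
  refine Finset.sum_congr rfl fun k _ => ?_
  simp only [Equiv.subRight_apply, sub_neg_eq_add, sub_add_cancel, neg_neg]
  -- goal: gam i (k-i) * (a i * b (k-i)) * τ (x k) = b (k-i) * (gam (-i) k * (mu (-i) * a i * τ (x k)))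
  have key : gam lam i (k - i) = gam lam (-i) k * mu lam (-i) := by
    by_cases hi : i = 0
    · subst hi; simp [mu]
    · have hiv : ((-i : Fin n) : ℕ) = n - (i : ℕ) := val_neg_of_ne i hi
      have hi1 : (i : ℕ) ≠ 0 := fun hh => hi (Fin.ext hh)
      have hi2 := i.is_lt; have hk2 := k.is_lt
      have hll : (lam : R) * lam = 1 := by simpa [sq] using hlam
      have hsub : ((k - i : Fin n) : ℕ)
          = if (i : ℕ) ≤ (k : ℕ) then (k : ℕ) - (i : ℕ) else (k : ℕ) + n - (i : ℕ) := by
        rw [Fin.sub_def]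
        simp only [Fin.val_mk]
        split_ifs with hle
        · rw [show n - (i : ℕ) + (k : ℕ) = n + ((k : ℕ) - (i : ℕ)) from by omega,
            Nat.add_mod_left]
          exact Nat.mod_eq_of_lt (by omega)
        · rw [show n - (i : ℕ) + (k : ℕ) = (k : ℕ) + n - (i : ℕ) from by omega]
          exact Nat.mod_eq_of_lt (by omega)
      unfold gam mu
      rw [if_neg (neg_ne_zero_fin hi), hiv, hsub]
      split_ifs <;> first | omega | exact hll.symm | rw [one_mul]
  linear_combination (a i * b (k - i) * τ (x k)) * key

include hττ' in
theorem ctForm_symm (u v : Fin n → R) :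
    ctForm τ u v = τ (ctForm τ v (fun i => τ' (τ' (u i)))) := by
  unfold ctForm
  rw [map_sum]
  refine Finset.sum_congr rfl fun i _ => ?_
  rw [map_mul, hττ', hττ', mul_comm]

include hlam hτlam hτ'lam hττ' hτ'τ in
/-- adjunction on the other side: `[(τ∘a)* x, b] = [x, ab]`. -/
theorem ctForm_mul_right (a x b : Fin n → R) :
    ctForm τ (ctMul lam (ctStar lam (fun i => τ (a i))) x) b
      = ctForm τ x (ctMul lam a b) := by
  rw [ctForm_symm τ τ' hττ' (ctMul lam (ctStar lam (fun i => τ (a i))) x) b]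
  have hmap : (fun i => τ' (τ' (ctMul lam (ctStar lam (fun i => τ (a i))) x i)))
      = ctMul lam (ctStar lam (fun i => τ' (a i))) (fun i => τ' (τ' (x i))) := by
    have h1 := map_ctMul lam (τ'.trans τ')
      (by simp only [RingEquiv.trans_apply, hτ'lam]) (ctStar lam (fun i => τ (a i))) x
    simp only [RingEquiv.trans_apply] at h1
    have h2 := map_ctStar lam (τ'.trans τ') hlam
      (by simp only [RingEquiv.trans_apply, hτ'lam]) (fun i => τ (a i))
    simp only [RingEquiv.trans_apply] at h2
    have h3 : (fun i => τ' (τ' (τ (a i)))) = fun i => τ' (a i) := by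
      funext i; rw [hτ'τ]
    rw [h1, h2, h3]
  rw [hmap]
  rw [← ctForm_mul_left lam τ τ' hlam hτlam hτ'lam hττ' a b (fun i => τ' (τ' (x i)))]
  exact (ctForm_symm τ τ' hττ' x (ctMul lam a b)).symm

include hlam hτlam hτ'lam hττ' in
theorem sharp_mul_eq_zero {e x : Fin n → R}
    (h : ∀ b, ctForm τ (ctMul lam e b) x = 0) :
    ctMul lam (ctStar lam (fun i => τ' (e i))) x = 0 := by
  apply eq_zero_of_forall_ctForm τ
  intro b
  rw [← ctForm_mul_left lam τ τ' hlam hτlam hτ'lam hττ' e b x]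
  exact h b

end Form

section Chain

variable [Fintype R] [IsLocalRing R]
variable (t : R) (ht : Ideal.span {t} = IsLocalRing.maximalIdeal R)
  (s : ℕ) (hs : t ^ s = 0) (hmin : ∀ j, t ^ j = 0 → s ≤ j)

include ht hs in
theorem chain_rep : ∀ x : R, ∃ (j : ℕ) (u : Rˣ), x = (u : R) * t ^ j := by
  have aux : ∀ (d j : ℕ), s ≤ j + d → ∀ x ∈ Ideal.span {t ^ j},
      ∃ (i : ℕ) (u : Rˣ), x = (u : R) * t ^ i := by
    intro d
    induction d with
    | zero =>
      intro j hj x hx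
      have htj : t ^ j = 0 := by
        have : t ^ j = t ^ s * t ^ (j - s) := by rw [← pow_add]; congr 1; omega
        rw [this, hs, zero_mul]
      obtain ⟨c, rfl⟩ := Ideal.mem_span_singleton'.mp hx
      exact ⟨j, 1, by simp [htj]⟩
    | succ d ihd =>
      intro j hj x hx
      obtain ⟨c, rfl⟩ := Ideal.mem_span_singleton'.mp hx
      by_cases hc : IsUnit c
      · obtain ⟨u, rfl⟩ := hc
        exact ⟨j, u, rfl⟩
      · have hcm : c ∈ IsLocalRing.maximalIdeal R := hc
        rw [← ht] at hcm
        obtain ⟨c', rfl⟩ := Ideal.mem_span_singleton'.mp hcm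
        refine ihd (j + 1) (by omega) _ (Ideal.mem_span_singleton'.mpr ⟨c', ?_⟩)
        rw [pow_succ]
        ring
  intro x
  exact aux s 0 (by omega) x (Ideal.mem_span_singleton'.mpr ⟨x, by rw [pow_zero, mul_one]⟩)

include ht hs in
theorem chain_ideal (I : Ideal R) : ∃ a, a ≤ s ∧ I = Ideal.span {t ^ a} := by
  have hst : ∃ a, t ^ a ∈ I := ⟨s, by rw [hs]; exact I.zero_mem⟩
  classical
  refine ⟨Nat.find hst, Nat.find_min' hst (by rw [hs]; exact I.zero_mem), le_antisymm ?_ ?_⟩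
  · intro x hx
    obtain ⟨j, u, rfl⟩ := chain_rep t ht s hs x
    have htj : t ^ j ∈ I := by
      have : t ^ j = ((u⁻¹ : Rˣ) : R) * ((u : R) * t ^ j) := by
        rw [← mul_assoc, ← Units.val_mul, inv_mul_cancel, Units.val_one, one_mul]
      rw [this]
      exact I.mul_mem_left _ hx
    have hj : Nat.find hst ≤ j := Nat.find_min' hst htj
    exact Ideal.mem_span_singleton'.mpr ⟨(u : R) * t ^ (j - Nat.find hst), by
      rw [mul_assoc, ← pow_add]
      congr 2
      omega⟩
  · rw [Ideal.span_le, Set.singleton_subset_iff]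
    exact Nat.find_spec hst

include ht hs hmin in
theorem chain_ann {a : ℕ} (ha : a ≤ s) {x : R} (hx : x * t ^ a = 0) :
    x ∈ Ideal.span {t ^ (s - a)} := by
  obtain ⟨j, u, rfl⟩ := chain_rep t ht s hs x
  have h0 : (u : R) * t ^ (j + a) = 0 := by rw [pow_add, ← mul_assoc]; exact hx
  have h1 : t ^ (j + a) = 0 := by
    have := congrArg (fun z => ((u⁻¹ : Rˣ) : R) * z) h0
    simpa [← mul_assoc] using this
  have hja : s ≤ j + a := hmin _ h1
  refine Ideal.mem_span_singleton'.mpr ⟨(u : R) * t ^ (j - (s - a)), ?_⟩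
  rw [mul_assoc, ← pow_add]
  congr 2
  omega

include ht hs hmin in
theorem chain_baer : Module.Baer R R := by
  intro I g
  obtain ⟨a, ha, rfl⟩ := chain_ideal t ht s hs I
  have hta : t ^ a ∈ Ideal.span {t ^ a} := Submodule.mem_span_singleton_self _
  set c := g ⟨t ^ a, hta⟩ with hcdef
  have hc0 : c * t ^ (s - a) = 0 := by
    have h1 : (t ^ (s - a)) • (⟨t ^ a, hta⟩ : Ideal.span {t ^ a}) = 0 := by
      apply Subtype.ext
      show t ^ (s - a) * t ^ a = 0
      rw [← pow_add, show s - a + a = s by omega, hs]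
    have := congrArg g h1
    rw [map_smul, map_zero] at this
    rw [mul_comm]
    simpa [smul_eq_mul] using this
  have hcmem := chain_ann t ht s hs hmin (by omega : s - a ≤ s) hc0
  rw [show s - (s - a) = a by omega] at hcmem
  obtain ⟨d, hd⟩ := Ideal.mem_span_singleton'.mp hcmem
  refine ⟨LinearMap.toSpanSingleton R R d, fun x hx => ?_⟩
  obtain ⟨r, rfl⟩ := Ideal.mem_span_singleton'.mp hx
  have hmk : (⟨r * t ^ a, hx⟩ : Ideal.span {t ^ a}) = r • ⟨t ^ a, hta⟩ := by
    apply Subtype.ext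
    simp [smul_eq_mul]
  rw [hmk, map_smul]
  show (r * t ^ a) • d = r • c
  rw [smul_eq_mul, smul_eq_mul]
  linear_combination r * hd

theorem finite_linearMap (X : Type*) [AddCommGroup X] [Module R X] [Finite X] :
    Finite (X →ₗ[R] R) :=
  Finite.of_injective (fun (φ : X →ₗ[R] R) => (φ : X → R)) DFunLike.coe_injective

include ht hs hmin in
theorem cyclic_hom_card {M : Type*} [AddCommGroup M] [Module R M] [Finite M] (m : M) :
    Nat.card (Submodule.span R {m} : Submodule R M)
      ≤ Nat.card ((Submodule.span R {m} : Submodule R M) →ₗ[R] R) := by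
  classical
  set ρ := LinearMap.toSpanSingleton R M m with hρ
  set I := LinearMap.ker ρ with hI
  obtain ⟨a, ha, hIa⟩ := chain_ideal t ht s hs I
  haveI : Finite (R ⧸ I) := Finite.of_surjective _ (Submodule.mkQ_surjective I)
  haveI := finite_linearMap (R := R) (R ⧸ I)
  haveI := finite_linearMap (R := R) (Submodule.span R {m} : Submodule R M)
  have eqv : (R ⧸ I) ≃ₗ[R] (Submodule.span R {m} : Submodule R M) :=
    (LinearMap.quotKerEquivRange ρ).trans
      (LinearEquiv.ofEq _ _ (LinearMap.span_singleton_eq_range R M m).symm)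
  have hle : I ≤ LinearMap.ker (LinearMap.toSpanSingleton R R (t ^ (s - a))) := by
    rw [hIa]
    intro r hr
    obtain ⟨c, rfl⟩ := Ideal.mem_span_singleton'.mp hr
    show (c * t ^ a) • t ^ (s - a) = 0
    rw [smul_eq_mul, mul_assoc, ← pow_add, show a + (s - a) = s by omega, hs, mul_zero]
  set L : (R ⧸ I) →ₗ[R] R := Submodule.liftQ I (LinearMap.toSpanSingleton R R (t ^ (s - a))) hle with hL
  have hLinj : ∀ y, L y = 0 → y = 0 := by
    intro y hy
    obtain ⟨r, rfl⟩ := Submodule.mkQ_surjective I y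
    rw [Submodule.mkQ_apply, Submodule.liftQ_apply] at hy
    have hr : r * t ^ (s - a) = 0 := by rwa [LinearMap.toSpanSingleton_apply, smul_eq_mul] at hy
    have := chain_ann t ht s hs hmin (show s - a ≤ s by omega) hr
    rw [show s - (s - a) = a by omega, ← hIa] at this
    rw [Submodule.mkQ_apply, Submodule.Quotient.mk_eq_zero]
    exact this
  set Θ : (R ⧸ I) → ((R ⧸ I) →ₗ[R] R) := fun y => L ∘ₗ LinearMap.mulLeft R y with hΘ
  have hΘinj : Function.Injective Θ := by
    intro y z hyz
    have h1 : L (y * 1) = L (z * 1) := by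
      have := congrArg (fun (ψ : (R ⧸ I) →ₗ[R] R) => ψ 1) hyz
      simpa [hΘ] using this
    rw [mul_one, mul_one] at h1
    have h2 : L (y - z) = 0 := by rw [map_sub, h1, sub_self]
    have := hLinj _ h2
    exact sub_eq_zero.mp this
  calc Nat.card (Submodule.span R {m} : Submodule R M)
      = Nat.card (R ⧸ I) := Nat.card_congr eqv.symm.toEquiv
    _ ≤ Nat.card ((R ⧸ I) →ₗ[R] R) := Nat.card_le_card_of_injective Θ hΘinj
    _ = Nat.card ((Submodule.span R {m} : Submodule R M) →ₗ[R] R) :=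
        Nat.card_congr (LinearEquiv.arrowCongr eqv (LinearEquiv.refl R R)).toEquiv

include ht hs hmin in
theorem hom_card (N : ℕ) :
    ∀ (M : Type*) [AddCommGroup M] [Module R M] [Finite M], Nat.card M ≤ N →
      Nat.card M ≤ Nat.card (M →ₗ[R] R) := by
  induction N using Nat.strong_induction_on with
  | _ N ih =>
    intro M _ _ _ hMN
    haveI := finite_linearMap (R := R) M
    by_cases hM : Subsingleton M
    · have h1 : Nat.card M ≤ 1 := Finite.card_le_one_iff_subsingleton.mpr hM
      have h2 : 0 < Nat.card (M →ₗ[R] R) := Nat.card_pos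
      omega
    · have : Nontrivial M := not_subsingleton_iff_nontrivial.mp hM
      obtain ⟨m, hm⟩ := exists_ne (0 : M)
      set N' : Submodule R M := Submodule.span R {m} with hN'
      set Q := M ⧸ N' with hQdef
      haveI : Finite Q := Finite.of_surjective _ (Submodule.mkQ_surjective N')
      haveI : Finite N' := inferInstance
      haveI := finite_linearMap (R := R) Q
      haveI := finite_linearMap (R := R) N'
      have hcard : Nat.card M = Nat.card N' * Nat.card Q :=
        Submodule.card_eq_card_quotient_mul_card N'
      have hN2 : 2 ≤ Nat.card N' := by
        haveI : Nontrivial N' := ⟨⟨0, N'.zero_mem⟩,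
          ⟨m, Submodule.mem_span_singleton_self m⟩, fun hh => hm (by
            have := congrArg Subtype.val hh
            exact this.symm)⟩
        exact Finite.one_lt_card
      have hQpos : 0 < Nat.card Q := Nat.card_pos
      have hQlt : Nat.card Q < N := by
        have h3 : 0 < Nat.card N' := by omega
        nlinarith [hcard, hMN, hQpos]
      have hQ : Nat.card Q ≤ Nat.card (Q →ₗ[R] R) := ih _ hQlt Q le_rfl
      have hcyc : Nat.card N' ≤ Nat.card (N' →ₗ[R] R) := cyclic_hom_card t ht s hs hmin m
      -- restriction
      set res : (M →ₗ[R] R) →ₗ[R] (N' →ₗ[R] R) := LinearMap.lcomp R R N'.subtype with hres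
      have hsurj : Function.Surjective res := by
        intro g
        obtain ⟨h, hh⟩ := (chain_baer t ht s hs hmin).extension_property
          N'.subtype N'.injective_subtype g
        exact ⟨h, hh⟩
      have hker : Nat.card (LinearMap.ker res) = Nat.card (Q →ₗ[R] R) := by
        refine Nat.card_congr ?_
        refine ⟨fun φ => N'.liftQ φ.1 (fun x hx => ?_), fun ψ => ⟨ψ ∘ₗ N'.mkQ, ?_⟩, ?_, ?_⟩
        · have h0 := φ.2
          rw [LinearMap.mem_ker] at h0
          have h1 : (res (φ : M →ₗ[R] R)) ⟨x, hx⟩ = 0 := by rw [h0]; rfl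
          exact h1
        · rw [LinearMap.mem_ker]
          apply LinearMap.ext
          intro y
          have hy0 : N'.mkQ (y : M) = 0 := (Submodule.Quotient.mk_eq_zero _).mpr y.2
          simp [hres, hy0]
        · intro φ
          apply Subtype.ext
          apply LinearMap.ext
          intro x
          exact LinearMap.congr_fun (Submodule.liftQ_mkQ _ _ _) x
        · intro ψ
          apply LinearMap.ext
          intro q
          obtain ⟨x, rfl⟩ := Submodule.mkQ_surjective N' q
          rfl
      have hquot : Nat.card ((M →ₗ[R] R) ⧸ LinearMap.ker res) = Nat.card (N' →ₗ[R] R) := by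
        refine Nat.card_congr ?_
        refine ((LinearMap.quotKerEquivRange res).trans (LinearEquiv.ofEq _ _ ?_)).toEquiv.trans
          (Submodule.topEquiv).toEquiv
        rw [LinearMap.range_eq_top]
        exact hsurj
      have htot : Nat.card (M →ₗ[R] R)
          = Nat.card (LinearMap.ker res) * Nat.card ((M →ₗ[R] R) ⧸ LinearMap.ker res) :=
        Submodule.card_eq_card_quotient_mul_card _
      rw [htot, hker, hquot, hcard]
      calc Nat.card N' * Nat.card Q ≤ Nat.card (N' →ₗ[R] R) * Nat.card (Q →ₗ[R] R) :=
            Nat.mul_le_mul hcyc hQ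
        _ = Nat.card (Q →ₗ[R] R) * Nat.card (N' →ₗ[R] R) := Nat.mul_comm _ _

variable [NeZero n]

/-- the (untwisted) dual code -/
def dualSub (C : Submodule R (Fin n → R)) : Submodule R (Fin n → R) where
  carrier := {y | ∀ c ∈ C, ∑ i, c i * y i = 0}
  add_mem' := by
    intro y z hy hz c hc
    simp only [Pi.add_apply, mul_add, Finset.sum_add_distrib, hy c hc, hz c hc, add_zero]
  zero_mem' := by
    intro c hc
    simp
  smul_mem' := by
    intro r y hy c hc
    simp only [Pi.smul_apply, smul_eq_mul, mul_left_comm, ← Finset.mul_sum, hy c hc, mul_zero]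

theorem mem_dualSub {C : Submodule R (Fin n → R)} {y : Fin n → R} :
    y ∈ dualSub C ↔ ∀ c ∈ C, ∑ i, c i * y i = 0 := Iff.rfl

include ht hs hmin in
theorem card_dual (C : Submodule R (Fin n → R)) :
    Nat.card (Fin n → R) ≤ Nat.card C * Nat.card (dualSub C) := by
  classical
  haveI : Finite ((Fin n → R) ⧸ C) := Finite.of_surjective _ (Submodule.mkQ_surjective C)
  haveI := finite_linearMap (R := R) ((Fin n → R) ⧸ C)
  have hM : Nat.card ((Fin n → R) ⧸ C) ≤ Nat.card (((Fin n → R) ⧸ C) →ₗ[R] R) :=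
    hom_card t ht s hs hmin (Nat.card ((Fin n → R) ⧸ C)) _ le_rfl
  set dl : Fin n → (Fin n → R) := fun i => fun j => if i = j then (1 : R) else 0 with hdl
  have key : ∀ (φ : ((Fin n → R) ⧸ C) →ₗ[R] R) (x : Fin n → R),
      φ (C.mkQ x) = ∑ i, x i * φ (C.mkQ (dl i)) := by
    intro φ x
    conv_lhs => rw [pi_eq_sum_univ x]
    rw [map_sum, map_sum]
    refine Finset.sum_congr rfl fun i _ => ?_
    rw [map_smul, map_smul, smul_eq_mul]
  have hmem : ∀ (φ : ((Fin n → R) ⧸ C) →ₗ[R] R),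
      (fun i => φ (C.mkQ (dl i))) ∈ dualSub C := by
    intro φ c hc
    rw [← key φ c, Submodule.mkQ_apply, (Submodule.Quotient.mk_eq_zero _).mpr hc, map_zero]
  set Λ : (((Fin n → R) ⧸ C) →ₗ[R] R) → (dualSub C) := fun φ => ⟨_, hmem φ⟩ with hΛ
  have hinj : Function.Injective Λ := by
    intro φ ψ h
    have h' : ∀ i, φ (C.mkQ (dl i)) = ψ (C.mkQ (dl i)) := by
      intro i
      exact congrFun (congrArg Subtype.val h) i
    apply LinearMap.ext
    intro q
    obtain ⟨x, rfl⟩ := Submodule.mkQ_surjective C q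
    rw [Submodule.mkQ_apply, ← Submodule.mkQ_apply C, key φ, key ψ]
    simp only [h']
  have h2 : Nat.card ((Fin n → R) ⧸ C) ≤ Nat.card (dualSub C) :=
    le_trans hM (Nat.card_le_card_of_injective Λ hinj)
  have h3 : Nat.card (Fin n → R) = Nat.card C * Nat.card ((Fin n → R) ⧸ C) :=
    Submodule.card_eq_card_quotient_mul_card C
  rw [h3]
  exact Nat.mul_le_mul_left _ h2

end Chain

end CT

open CT

/-- Over a finite commutative chain ring `R` of characteristic `p`, with `σ`
an automorphism of order `m`, `λ² = 1` and `σ^{m-k}(λ) = λ`, a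
`λ`-constacyclic code `C` (an ideal of `R^{γ_λ} C_n`) is a `k`-Galois LCD code
(`C ∩ C^{⊥_k} = {0}`) iff `C` is generated by an idempotent `e` with
`e = e·(σᵏ(e))*`. -/
theorem kGalois_LCD_iff_idempotent {R : Type*} [CommRing R] [Fintype R]
    [IsLocalRing R] (hchain : (IsLocalRing.maximalIdeal R).IsPrincipal)
    (p : ℕ) (hp : p.Prime) (hchar : ringChar R = p)
    {n : ℕ} [NeZero n] (hn : ¬ p ∣ n)
    (σ : RingAut R) (m k : ℕ) (hord : orderOf σ = m) (hk : k < m)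
    (lam : Rˣ) (hlam : (lam : R) ^ 2 = 1)
    (hσlam : (σ ^ (m - k)) ((lam : R)) = (lam : R))
    (C : Submodule R (Fin n → R))
    (hC : ∀ x : Fin n → R, ∀ c ∈ C, ctMul lam x c ∈ C) :
    (∀ x ∈ C, (∀ c ∈ C, ∑ i : Fin n, c i * (σ ^ k) (x i) = 0) → x = 0) ↔
      ∃ e : Fin n → R, ctMul lam e e = e ∧
        ctMul lam e (ctStar lam (fun i => (σ ^ k) (e i))) = e ∧
        (∀ x, x ∈ C ↔ ∃ a : Fin n → R, x = ctMul lam a e) := by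
  classical
  set τ : R ≃+* R := (σ ^ k : RingAut R) with hτdef
  set τ' : R ≃+* R := (σ ^ (m - k) : RingAut R) with hτ'def
  have hm0 : σ ^ m = 1 := by rw [← hord]; exact pow_orderOf_eq_one σ
  have hcomp1 : (σ ^ k) * (σ ^ (m - k)) = 1 := by
    rw [← pow_add, show k + (m - k) = m from by omega, hm0]
  have hcomp2 : (σ ^ (m - k)) * (σ ^ k) = 1 := by
    rw [← pow_add, show m - k + k = m from by omega, hm0]
  have hττ' : ∀ x : R, τ (τ' x) = x := fun x =>
    congrArg (fun (g : RingAut R) => g x) hcomp1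
  have hτ'τ : ∀ x : R, τ' (τ x) = x := fun x =>
    congrArg (fun (g : RingAut R) => g x) hcomp2
  have hτ'lam : τ' (lam : R) = (lam : R) := hσlam
  have hτlam : τ (lam : R) = (lam : R) := by
    conv_lhs => rw [← hτ'lam]
    rw [hττ']
  -- the two semilinear involutions
  set dag : (Fin n → R) → (Fin n → R) := fun x => ctStar lam (fun i => τ (x i)) with hdag
  set sharp : (Fin n → R) → (Fin n → R) := fun x => ctStar lam (fun i => τ' (x i)) with hsharp
  have hsd : ∀ x, sharp (dag x) = x := by
    intro x
    show ctStar lam (fun i => τ' (ctStar lam (fun i => τ (x i)) i)) = x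
    rw [map_ctStar lam τ' hlam hτ'lam]
    have : (fun i => τ' (τ (x i))) = x := by funext i; rw [hτ'τ]
    rw [this, ctStar_ctStar lam hlam]
  have hds : ∀ x, dag (sharp x) = x := by
    intro x
    show ctStar lam (fun i => τ (ctStar lam (fun i => τ' (x i)) i)) = x
    rw [map_ctStar lam τ hlam hτlam]
    have : (fun i => τ (τ' (x i))) = x := by funext i; rw [hττ']
    rw [this, ctStar_ctStar lam hlam]
  have hsharpMul : ∀ a b, sharp (ctMul lam a b) = ctMul lam (sharp a) (sharp b) := by
    intro a b
    show ctStar lam (fun i => τ' (ctMul lam a b i)) = _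
    rw [map_ctMul lam τ' hτ'lam, ctStar_ctMul lam hlam]
  have hdagMul : ∀ a b, dag (ctMul lam a b) = ctMul lam (dag a) (dag b) := by
    intro a b
    show ctStar lam (fun i => τ (ctMul lam a b i)) = _
    rw [map_ctMul lam τ hτlam, ctStar_ctMul lam hlam]
  have hsharpInj : Function.Injective sharp := Function.LeftInverse.injective hds
  constructor
  · -- LCD → idempotent generator
    intro hLCD
    -- chain ring data
    obtain ⟨t, ht0⟩ := hchain
    have ht : Ideal.span {t} = IsLocalRing.maximalIdeal R := ht0.symm
    have hnil : IsNilpotent (IsLocalRing.maximalIdeal R) := by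
      have h1 := IsArtinianRing.isNilpotent_jacobson_bot (R := R)
      rwa [IsLocalRing.jacobson_eq_maximalIdeal ⊥ bot_ne_top] at h1
    obtain ⟨s0, hs0⟩ := hnil
    have hts0 : t ^ s0 = 0 := by
      have h1 : t ^ s0 ∈ Ideal.span {t} ^ s0 := by
        rw [Ideal.span_singleton_pow]
        exact Submodule.mem_span_singleton_self _
      rw [ht, hs0] at h1
      simpa using h1
    have hex : ∃ j, t ^ j = 0 := ⟨s0, hts0⟩
    set s := Nat.find hex with hsdef
    have hs : t ^ s = 0 := Nat.find_spec hex
    have hmin : ∀ j, t ^ j = 0 → s ≤ j := fun j hj => Nat.find_min' hex hj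
    -- the perp set
    set Cperp : Set (Fin n → R) := {x | ∀ c ∈ C, ∑ i, c i * τ (x i) = 0} with hCperp
    have hperpsub : ∀ x y : Fin n → R, x ∈ Cperp → y ∈ Cperp → x - y ∈ Cperp := by
      intro x y hx hy c hc
      have h1 := hx c hc
      have h2 := hy c hc
      simp only [Pi.sub_apply, map_sub, mul_sub, Finset.sum_sub_distrib, h1, h2, sub_zero]
    -- |Cperp| = |dualSub C|
    have hcards : Nat.card Cperp = Nat.card (dualSub C) := by
      refine Nat.card_congr ⟨fun x => ⟨fun i => τ (x.1 i), x.2⟩,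
        fun y => ⟨fun i => τ.symm (y.1 i), ?_⟩, ?_, ?_⟩
      · intro c hc
        have := y.2 c hc
        simpa [RingEquiv.apply_symm_apply] using this
      · intro x
        apply Subtype.ext
        funext i
        simp
      · intro y
        apply Subtype.ext
        funext i
        simp
    have hbig : Nat.card (Fin n → R) ≤ Nat.card C * Nat.card Cperp := by
      rw [hcards]
      exact card_dual t ht s hs hmin C
    -- the sum map is bijective
    set P : ↥C × ↥Cperp → (Fin n → R) := fun q => q.1.1 + q.2.1 with hP
    have hPinj : Function.Injective P := by
      rintro ⟨⟨c1, hc1⟩, ⟨x1, hx1⟩⟩ ⟨⟨c2, hc2⟩, ⟨x2, hx2⟩⟩ hq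
      have hq' : c1 + x1 = c2 + x2 := hq
      have hd : c1 - c2 = x2 - x1 := by linear_combination hq'
      have hdC : c1 - c2 ∈ C := sub_mem hc1 hc2
      have hdP : c1 - c2 ∈ Cperp := by rw [hd]; exact hperpsub _ _ hx2 hx1
      have h0 : c1 - c2 = 0 := hLCD _ hdC (fun c hc => hdP c hc)
      have hc12 : c1 = c2 := by linear_combination h0
      have hx12 : x1 = x2 := by
        have : x2 - x1 = 0 := by rw [← hd]; exact h0
        linear_combination -this
      simp only [Prod.mk.injEq, Subtype.mk.injEq]
      exact ⟨hc12, hx12⟩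
    have hPbij : Function.Bijective P := by
      rw [Nat.bijective_iff_injective_and_card]
      refine ⟨hPinj, le_antisymm (Nat.card_le_card_of_injective P hPinj) ?_⟩
      rw [Nat.card_prod]
      exact hbig
    obtain ⟨⟨⟨e, heC⟩, ⟨f, hfP⟩⟩, hef⟩ := hPbij.2 (ctOne (R := R) (n := n))
    have hef' : e + f = ctOne := hef
    -- Cperp is an ideal
    have hperpmul : ∀ a x, x ∈ Cperp → ctMul lam a x ∈ Cperp := by
      intro a x hx c hc
      have h1 : ctForm τ (ctMul lam (ctStar lam (fun i => τ (a i))) c) x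
          = ctForm τ c (ctMul lam a x) :=
        ctForm_mul_right lam τ τ' hlam hτlam hτ'lam hττ' hτ'τ a c x
      have h2 : ctMul lam (ctStar lam (fun i => τ (a i))) c ∈ C := hC _ c hc
      have h3 : ctForm τ (ctMul lam (ctStar lam (fun i => τ (a i))) c) x = 0 :=
        hx _ h2
      show ctForm τ c (ctMul lam a x) = 0
      rw [← h1, h3]
    -- products C × Cperp vanish
    have hmix : ∀ y x, y ∈ C → x ∈ Cperp → ctMul lam y x = 0 := by
      intro y x hy hx
      have h1 : ctMul lam y x ∈ C := by
        rw [ctMul_comm]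
        exact hC x y hy
      have h2 : ctMul lam y x ∈ Cperp := hperpmul y x hx
      exact hLCD _ h1 (fun c hc => h2 c hc)
    have hee : ctMul lam e e = e := by
      have h1 : ctMul lam e (e + f) = e := by rw [hef']; exact ctMul_one lam e
      rw [ctMul_add_right] at h1
      rw [hmix e f heC hfP, add_zero] at h1
      exact h1
    have hgen : ∀ x, x ∈ C ↔ ∃ a, x = ctMul lam a e := by
      intro x
      constructor
      · intro hx
        have h1 : ctMul lam x (e + f) = x := by rw [hef']; exact ctMul_one lam x
        rw [ctMul_add_right] at h1
        rw [hmix x f hx hfP, add_zero] at h1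
        exact ⟨x, h1.symm⟩
      · rintro ⟨a, rfl⟩
        exact hC a e heC
    have hsharpe : ctMul lam (sharp e) f = 0 := by
      apply sharp_mul_eq_zero lam τ τ' hlam hτlam hτ'lam hττ'
      intro b
      have h1 : ctMul lam e b ∈ C := by
        rw [ctMul_comm]
        exact hC b e heC
      exact hfP _ h1
    have hse2 : ctMul lam (sharp e) e = sharp e := by
      have h1 : ctMul lam (sharp e) (e + f) = sharp e := by
        rw [hef']; exact ctMul_one lam (sharp e)
      rw [ctMul_add_right, hsharpe, add_zero] at h1
      exact h1
    have hdagE : ctMul lam e (dag e) = e := by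
      have h2 := congrArg dag hse2
      rw [hdagMul, hds] at h2
      exact h2
    exact ⟨e, hee, hdagE, hgen⟩
  · -- idempotent generator → LCD
    rintro ⟨e, hee, hdagE, hgen⟩
    intro x hxC hxperp
    have heC : e ∈ C := (hgen e).mpr ⟨e, hee.symm⟩
    have hsharpx : ctMul lam (sharp e) x = 0 := by
      apply sharp_mul_eq_zero lam τ τ' hlam hτlam hτ'lam hττ'
      intro b
      have h1 : ctMul lam e b ∈ C := by
        rw [ctMul_comm]
        exact hC b e heC
      exact hxperp _ h1
    -- sharp e = (sharp e) * e  ∈ C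
    have hse2 : sharp e = ctMul lam (sharp e) e := by
      have h2 := congrArg sharp hdagE
      rw [hsharpMul, hsd] at h2
      conv_lhs => rw [← h2]
    -- sharp maps C into C
    have hmaps : ∀ y ∈ C, sharp y ∈ C := by
      intro y hy
      obtain ⟨a, rfl⟩ := (hgen y).mp hy
      rw [hsharpMul]
      rw [hse2 ]
      rw [← ctMul_assoc]
      exact (hgen _).mpr ⟨_, rfl⟩
    -- finiteness: sharp '' C = C
    have himg : sharp '' (C : Set (Fin n → R)) = (C : Set (Fin n → R)) := by
      apply Set.eq_of_subset_of_ncard_le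
      · rintro _ ⟨y, hy, rfl⟩
        exact hmaps y hy
      · rw [Set.ncard_image_of_injective _ hsharpInj]
      · exact Set.toFinite _
    have hdagC : dag e ∈ C := by
      have h1 : e ∈ sharp '' (C : Set (Fin n → R)) := by rw [himg]; exact heC
      obtain ⟨c, hc, hce⟩ := h1
      have : c = dag e := by rw [← hce, hds]
      rwa [← this]
    have hde : ctMul lam (dag e) e = dag e := by
      obtain ⟨b, hb⟩ := (hgen (dag e)).mp hdagC
      rw [hb, ctMul_assoc, hee]
    have hesharp : e = ctMul lam e (sharp e) := by
      have h2 := congrArg sharp hde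
      rw [hsharpMul, hsd] at h2
      conv_lhs => rw [← h2]
    obtain ⟨a, rfl⟩ := (hgen x).mp hxC
    calc ctMul lam a e = ctMul lam a (ctMul lam e (sharp e)) := by rw [← hesharp]
      _ = ctMul lam (ctMul lam a e) (sharp e) := (ctMul_assoc lam a e (sharp e)).symm
      _ = ctMul lam (sharp e) (ctMul lam a e) := ctMul_comm lam _ _
      _ = 0 := hsharpx
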